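/- Let A be an m×n real matrix, x ∈ ℝⁿ, K ⊆ {1,...,n}, and C > 1, and assume that for all w ∈ ker A we have ‖x_K + w_K‖₁ + (1/C)‖w_{K̄}‖₁ ≥ ‖x_K‖₁. Then any ℓ₁ minimizer x̂ subject to Ax̂ = Ax satisfies the total error bound ‖x − x̂‖₁ ≤ ‖(x − x̂)_K‖₁ + (2C/(C−1))‖x_{K̄}‖₁. -/
import Mathlib


noncomputable def l1 {n : ℕ} (x : Fin n → ℝ) : ℝ := ∑ i, |x i|

def restr {n : ℕ} (x : Fin n → ℝ) (S : Finset (Fin n)) : Fin n → ℝ :=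
  fun i => if i ∈ S then x i else 0

lemma l1_restr {n : ℕ} (v : Fin n → ℝ) (S : Finset (Fin n)) :
    l1 (restr v S) = ∑ i ∈ S, |v i| := by
  simp [l1, restr, apply_ite abs, Finset.sum_ite_mem]

lemma l1_split {n : ℕ} (v : Fin n → ℝ) (K : Finset (Fin n)) :
    l1 v = l1 (restr v K) + l1 (restr v Kᶜ) := by
  rw [l1_restr, l1_restr, Finset.sum_add_sum_compl]
  rfl

lemma l1_nonneg {n : ℕ} (v : Fin n → ℝ) : 0 ≤ l1 v :=
  Finset.sum_nonneg fun i _ => abs_nonneg _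

lemma l1_add {n : ℕ} (a b : Fin n → ℝ) : l1 (a + b) ≤ l1 a + l1 b := by
  unfold l1
  rw [← Finset.sum_add_distrib]
  exact Finset.sum_le_sum fun i _ => abs_add_le _ _

lemma l1_neg {n : ℕ} (a : Fin n → ℝ) : l1 (-a) = l1 a := by
  simp [l1]

lemma restr_add {n : ℕ} (a b : Fin n → ℝ) (S : Finset (Fin n)) :
    restr (a + b) S = restr a S + restr b S := by
  funext i; simp [restr]; split <;> simp

lemma restr_neg {n : ℕ} (a : Fin n → ℝ) (S : Finset (Fin n)) :
    restr (-a) S = -(restr a S) := by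
  funext i; simp [restr]; split <;> simp

theorem stmt_7 {m n : ℕ} (A : Matrix (Fin m) (Fin n) ℝ) (x : Fin n → ℝ)
    (K : Finset (Fin n)) (C : ℝ) (hC : 1 < C)
    (hns : ∀ w : Fin n → ℝ, A.mulVec w = 0 →
      l1 (restr x K + restr w K) + (1 / C) * l1 (restr w Kᶜ) ≥ l1 (restr x K))
    (xhat : Fin n → ℝ) (hfeas : A.mulVec xhat = A.mulVec x)
    (hmin : ∀ z : Fin n → ℝ, A.mulVec z = A.mulVec x → l1 xhat ≤ l1 z) :
    l1 (x - xhat) ≤ l1 (restr (x - xhat) K) + (2 * C / (C - 1)) * l1 (restr x Kᶜ) := by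
  set h : Fin n → ℝ := xhat - x with hh
  have hker : A.mulVec h = 0 := by
    rw [hh, Matrix.mulVec_sub, hfeas, sub_self]
  have h1 := hns h hker
  -- restr x K + restr h K = restr xhat K
  have hxh : restr x K + restr h K = restr xhat K := by
    rw [← restr_add]; congr 1; funext i; simp [hh]
  rw [hxh] at h1
  -- key quantities
  set a := l1 (restr xhat K)
  set b := l1 (restr xhat Kᶜ)
  set hK := l1 (restr h Kᶜ)
  set sK := l1 (restr x K)
  set sKc := l1 (restr x Kᶜ)
  have h2 : a + b ≤ sK + sKc := by
    have := hmin x rfl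
    rw [l1_split xhat K, l1_split x K] at this
    exact this
  have h3 : hK ≤ b + sKc := by
    have : restr h Kᶜ = restr xhat Kᶜ + restr (-x) Kᶜ := by
      funext i; simp [restr, hh, Pi.sub_apply]; split <;> ring
    calc hK = l1 (restr xhat Kᶜ + restr (-x) Kᶜ) := by show l1 (restr h Kᶜ) = _; rw [this]
      _ ≤ l1 (restr xhat Kᶜ) + l1 (restr (-x) Kᶜ) := l1_add _ _
      _ = b + sKc := by rw [restr_neg, l1_neg]
  have hC0 : (0:ℝ) < C := by linarith
  have h4 : C * ((1/C) * hK) = hK := by field_simp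
  have hkey : hK ≤ 2 * C / (C - 1) * sKc := by
    rw [div_mul_eq_mul_div, le_div_iff₀ (by linarith : (0:ℝ) < C - 1)]
    nlinarith [mul_le_mul_of_nonneg_left (by linarith : hK - 2 * sKc ≤ (1/C) * hK) hC0.le]
  have hsplit := l1_split (x - xhat) K
  have hneg : restr (x - xhat) Kᶜ = -(restr h Kᶜ) := by
    rw [← restr_neg]; congr 1; funext i; simp [hh]
  rw [hsplit, hneg, l1_neg]
  linarith
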